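/- Let k be any field and consider the polynomial ring k[x,y,u,v,f,g,p,q] graded so that x, y, u, v have degree 1 and f, g, p, q have degree 2. There do not exist weighted-homogeneous polynomials g_1, g_2, g_3, h_1, h_2, h_3 of degree 2 in this ring such that x²f + y²g + u²p + v²q = g_1h_1 + g_2h_2 + g_3h_3. -/

import Mathlib

/-- The weights on the polynomial ring `k[x,y,u,v,f,g,p,q]`: the first four variables
`x, y, u, v` have degree 1 and the last four variables `f, g, p, q` have degree 2. -/
def strengthWeight : Fin 8 → ℕ := fun i => if (i : ℕ) < 4 then 1 else 2

open MvPolynomial Finset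


open MvPolynomial

lemma pderiv_isWH {σ : Type*} [DecidableEq σ] {R : Type*} [CommRing R] {w : σ → ℕ}
    {p : MvPolynomial σ R} {n m : ℕ} {i : σ}
    (hp : p.IsWeightedHomogeneous w n) (h : m + w i = n) :
    (pderiv i p).IsWeightedHomogeneous w m := by
  classical
  rw [p.as_sum, map_sum]
  apply IsWeightedHomogeneous.sum
  intro d hd
  rw [pderiv_monomial]
  by_cases hc : (coeff d p) * (d i : R) = 0
  · rw [hc, monomial_zero]
    exact isWeightedHomogeneous_zero R w m
  · apply isWeightedHomogeneous_monomial
    have hdi : d i ≠ 0 := by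
      intro h0
      apply hc
      rw [h0]
      simp
    have hcd : coeff d p ≠ 0 := by
      intro h0; apply hc; rw [h0, zero_mul]
    have hw : Finsupp.weight w d = n := hp hcd
    have hsplit : (d - Finsupp.single i 1) + Finsupp.single i 1 = d := by
      ext j
      by_cases hj : j = i
      · subst hj
        simp only [Finsupp.add_apply, Finsupp.tsub_apply, Finsupp.single_eq_same]
        omega
      · simp [Finsupp.single_eq_of_ne' (Ne.symm hj)]
    have hkey := congrArg (Finsupp.weight w) hsplit
    rw [map_add] at hkey
    have hws : Finsupp.weight w (Finsupp.single i 1) = w i := by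
      rw [Finsupp.weight_apply, Finsupp.sum_single_index] <;> simp
    rw [hws, hw] at hkey
    omega

lemma isWH_zero_eq_C {σ : Type*} {R : Type*} [CommRing R] {w : σ → ℕ}
    (hw : ∀ i, w i ≠ 0) {p : MvPolynomial σ R}
    (hp : p.IsWeightedHomogeneous w 0) : p = C (coeff 0 p) := by
  conv_lhs => rw [← hp.weightedHomogeneousComponent_same]
  rw [weightedHomogeneousComponent_zero _ hw]

open Finset

lemma la_lemma {k : Type*} [Field k] (a b : Fin 3 → Fin 4 → k)
    (h : ∀ j j' : Fin 4, ∑ i, (a i j * b i j' + a i j' * b i j) = 0) :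
    ∃ c : Fin 4 → k, c ≠ 0 ∧ ∀ i, (∑ j, c j * a i j) = 0 ∧ (∑ j, c j * b i j) = 0 := by
  classical
  by_contra hc
  push_neg at hc
  let r : Fin 4 → ((Fin 3 → k) × (Fin 3 → k)) := fun j => (fun i => a i j, fun i => b i j)
  have hli : LinearIndependent k r := by
    rw [Fintype.linearIndependent_iff]
    intro g hg
    by_contra hgj
    push_neg at hgj
    obtain ⟨j0, hj0⟩ := hgj
    have hgne : g ≠ 0 := fun h0 => hj0 (congrFun h0 j0)
    obtain ⟨i, hi⟩ := hc g hgne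
    have h1 : (∑ j, g j • r j).1 i = ∑ j, g j * a i j := by
      simp [r, Prod.fst_sum, Finset.sum_apply]
    have h2 : (∑ j, g j • r j).2 i = ∑ j, g j * b i j := by
      simp [r, Prod.snd_sum, Finset.sum_apply]
    rw [hg] at h1 h2
    simp only [Prod.fst_zero, Pi.zero_apply] at h1
    simp only [Prod.snd_zero, Pi.zero_apply] at h2
    exact hi h1.symm h2.symm
  let B : LinearMap.BilinForm k ((Fin 3 → k) × (Fin 3 → k)) :=
    LinearMap.mk₂ k (fun v w => ∑ i, (v.1 i * w.2 i + v.2 i * w.1 i))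
      (fun x z y => by
        rw [← Finset.sum_add_distrib]
        refine Finset.sum_congr rfl fun i _ => ?_
        simp only [Prod.fst_add, Prod.snd_add, Pi.add_apply]
        ring)
      (fun c x y => by
        rw [smul_eq_mul, Finset.mul_sum]
        refine Finset.sum_congr rfl fun i _ => ?_
        simp only [Prod.smul_fst, Prod.smul_snd, Pi.smul_apply, smul_eq_mul]
        ring)
      (fun x y z => by
        rw [← Finset.sum_add_distrib]
        refine Finset.sum_congr rfl fun i _ => ?_
        simp only [Prod.fst_add, Prod.snd_add, Pi.add_apply]
        ring)
      (fun c x y => by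
        rw [smul_eq_mul, Finset.mul_sum]
        refine Finset.sum_congr rfl fun i _ => ?_
        simp only [Prod.smul_fst, Prod.smul_snd, Pi.smul_apply, smul_eq_mul]
        ring)
  have hBapply : ∀ v w : ((Fin 3 → k) × (Fin 3 → k)),
      B v w = ∑ i, (v.1 i * w.2 i + v.2 i * w.1 i) := fun v w => rfl
  have hBflip : ∀ v w : ((Fin 3 → k) × (Fin 3 → k)), B.flip v w = B w v := fun v w => rfl
  have hBsymm : ∀ v w : ((Fin 3 → k) × (Fin 3 → k)), B v w = B w v := by
    intro v w
    rw [hBapply, hBapply]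
    apply Finset.sum_congr rfl; intros; ring
  have hrefl : B.IsRefl := fun v w h0 => by rw [hBsymm]; exact h0
  have hnd : B.Nondegenerate := by
    suffices hsl : ∀ v, (∀ w, B v w = 0) → v = 0 from
      ⟨hsl, fun v hv => hsl v (fun w => by rw [hBsymm]; exact hv w)⟩
    intro v hv
    have h1 : ∀ t, v.1 t = 0 := by
      intro t
      have := hv (0, Pi.single t 1)
      rw [hBapply] at this
      simpa [Pi.single_apply, Finset.sum_ite_eq'] using this
    have h2 : ∀ t, v.2 t = 0 := by
      intro t
      have := hv (Pi.single t 1, 0)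
      rw [hBapply] at this
      simpa [Pi.single_apply, Finset.sum_ite_eq'] using this
    ext t
    · exact h1 t
    · exact h2 t
  have hBr : ∀ j j', B (r j) (r j') = 0 := by
    intro j j'
    rw [hBapply]
    rw [show (∑ i, ((r j).1 i * (r j').2 i + (r j).2 i * (r j').1 i))
        = ∑ i, (a i j * b i j' + a i j' * b i j) from
      Finset.sum_congr rfl (fun i _ => by simp only [r]; ring)]
    exact h j j'
  have horth : Submodule.span k (Set.range r) ≤ B.orthogonal (Submodule.span k (Set.range r)) := by
    intro v hvW
    rw [LinearMap.BilinForm.mem_orthogonal_iff]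
    intro n hnW
    have hn : ∀ j, B n (r j) = 0 := by
      intro j
      have key : Submodule.span k (Set.range r) ≤ LinearMap.ker (B.flip (r j)) := by
        rw [Submodule.span_le]
        rintro _ ⟨j', rfl⟩
        simp only [SetLike.mem_coe, LinearMap.mem_ker]
        rw [hBflip]
        exact hBr j' j
      have := key hnW
      rw [LinearMap.mem_ker, hBflip] at this
      exact this
    have hWker : Submodule.span k (Set.range r) ≤ LinearMap.ker (B.flip n) := by
      rw [Submodule.span_le]
      rintro _ ⟨j, rfl⟩
      simp only [SetLike.mem_coe, LinearMap.mem_ker]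
      rw [hBflip, hBsymm]
      exact hn j
    have := hWker hvW
    rw [LinearMap.mem_ker, hBflip] at this
    rw [hBsymm]
    exact this
  have hfinV : Module.finrank k ((Fin 3 → k) × (Fin 3 → k)) = 6 := by
    rw [Module.finrank_prod, Module.finrank_fin_fun]
  have hfinW : Module.finrank k (Submodule.span k (Set.range r)) = 4 := by
    rw [finrank_span_eq_card hli]
    simp
  have hfinO : Module.finrank k (B.orthogonal (Submodule.span k (Set.range r))) = 2 := by
    rw [LinearMap.BilinForm.finrank_orthogonal hnd, hfinV, hfinW]
  have hle := Submodule.finrank_mono horth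
  rw [hfinW, hfinO] at hle
  omega

section auxmain

variable {k : Type*} [Field k]

private def xv : Fin 4 → Fin 8 := fun j => ⟨(j : ℕ), by omega⟩
private def zv : Fin 4 → Fin 8 := fun j => ⟨(j : ℕ) + 4, by omega⟩

private lemma hwpos : ∀ i : Fin 8, strengthWeight i ≠ 0 := by
  intro i; unfold strengthWeight; split <;> simp

private lemma hwz (j : Fin 4) : strengthWeight (zv j) = 2 := by
  simp [strengthWeight, zv]

private lemma xv_ne_zv (s j : Fin 4) : xv s ≠ zv j := by
  intro hc
  have h' : (s : ℕ) = (j : ℕ) + 4 := congrArg Fin.val hc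
  omega

private lemma zv_ne_zv {s j : Fin 4} (h : s ≠ j) : zv s ≠ zv j := by
  intro hc
  have h' : (s : ℕ) + 4 = (j : ℕ) + 4 := congrArg Fin.val hc
  exact h (Fin.ext (by omega))

private lemma xv_inj : Function.Injective xv := by
  intro s t h
  have h' := congrArg Fin.val h
  exact Fin.ext h'

end auxmain

open MvPolynomial in
/-- In `k[x,y,u,v,f,g,p,q]` with `deg x = deg y = deg u = deg v = 1` and
`deg f = deg g = deg p = deg q = 2`, there are no weighted-homogeneous polynomials
`g₁, g₂, g₃, h₁, h₂, h₃` of degree 2 with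
`x²f + y²g + u²p + v²q = g₁h₁ + g₂h₂ + g₃h₃`. -/
theorem case_d (k : Type*) [Field k] :
    ¬ ∃ g1 g2 g3 h1 h2 h3 : MvPolynomial (Fin 8) k,
      g1.IsWeightedHomogeneous strengthWeight 2 ∧
      g2.IsWeightedHomogeneous strengthWeight 2 ∧
      g3.IsWeightedHomogeneous strengthWeight 2 ∧
      h1.IsWeightedHomogeneous strengthWeight 2 ∧
      h2.IsWeightedHomogeneous strengthWeight 2 ∧
      h3.IsWeightedHomogeneous strengthWeight 2 ∧
      (X 0 ^ 2 * X 4 + X 1 ^ 2 * X 5 + X 2 ^ 2 * X 6 + X 3 ^ 2 * X 7 :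
          MvPolynomial (Fin 8) k) = g1 * h1 + g2 * h2 + g3 * h3 := by
  rintro ⟨g1, g2, g3, h1, h2, h3, hg1, hg2, hg3, hh1, hh2, hh3, heq⟩
  classical
  set G : Fin 3 → MvPolynomial (Fin 8) k := ![g1, g2, g3] with hG
  set H : Fin 3 → MvPolynomial (Fin 8) k := ![h1, h2, h3] with hH
  have hGw : ∀ i, (G i).IsWeightedHomogeneous strengthWeight 2 := by
    intro i; fin_cases i <;> simpa [hG] using ‹_›
  have hHw : ∀ i, (H i).IsWeightedHomogeneous strengthWeight 2 := by
    intro i; fin_cases i <;> simpa [hH] using ‹_›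
  have heq' : (∑ s : Fin 4, X (xv s) ^ 2 * X (zv s) : MvPolynomial (Fin 8) k)
      = ∑ i : Fin 3, G i * H i := by
    rw [Fin.sum_univ_four, Fin.sum_univ_three]
    have e0 : xv 0 = 0 := rfl
    have e1 : xv 1 = 1 := rfl
    have e2 : xv 2 = 2 := rfl
    have e3 : xv 3 = 3 := rfl
    have f0 : zv 0 = 4 := rfl
    have f1 : zv 1 = 5 := rfl
    have f2 : zv 2 = 6 := rfl
    have f3 : zv 3 = 7 := rfl
    rw [e0, e1, e2, e3, f0, f1, f2, f3]
    simpa [hG, hH] using heq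
  set A : Fin 3 → Fin 4 → k := fun i j => coeff 0 (pderiv (zv j) (G i)) with hA
  set B : Fin 3 → Fin 4 → k := fun i j => coeff 0 (pderiv (zv j) (H i)) with hB
  have hGC : ∀ i j, pderiv (zv j) (G i) = C (A i j) := fun i j =>
    isWH_zero_eq_C hwpos (pderiv_isWH (hGw i) (by rw [hwz]))
  have hHC : ∀ i j, pderiv (zv j) (H i) = C (B i j) := fun i j =>
    isWH_zero_eq_C hwpos (pderiv_isWH (hHw i) (by rw [hwz]))
  have hX : ∀ j : Fin 4, (X (xv j) ^ 2 : MvPolynomial (Fin 8) k)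
      = ∑ i : Fin 3, (C (A i j) * H i + G i * C (B i j)) := by
    intro j
    have hder := congrArg (pderiv (zv j)) heq'
    rw [map_sum, map_sum] at hder
    have lhs : ∑ s : Fin 4, pderiv (zv j) (X (xv s) ^ 2 * X (zv s))
        = (X (xv j) ^ 2 : MvPolynomial (Fin 8) k) := by
      rw [Finset.sum_eq_single j]
      · simp [pderiv_mul, pderiv_pow, pderiv_X_of_ne (xv_ne_zv j j), pderiv_X_self]
      · intro s _ hs
        simp [pderiv_mul, pderiv_pow, pderiv_X_of_ne (xv_ne_zv s j),
          pderiv_X_of_ne (zv_ne_zv hs)]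
      · simp
    rw [lhs] at hder
    rw [hder]
    refine Finset.sum_congr rfl fun i _ => ?_
    rw [pderiv_mul, hGC, hHC]
  have hrel : ∀ j j' : Fin 4, ∑ i : Fin 3, (A i j * B i j' + A i j' * B i j) = 0 := by
    intro j j'
    have hder := congrArg (pderiv (zv j')) (hX j)
    rw [map_sum] at hder
    have lhs : pderiv (zv j') (X (xv j) ^ 2 : MvPolynomial (Fin 8) k) = 0 := by
      simp [pderiv_pow, pderiv_X_of_ne (xv_ne_zv j j')]
    rw [lhs] at hder
    have rhs : ∀ i ∈ Finset.univ (α := Fin 3), pderiv (zv j') (C (A i j) * H i + G i * C (B i j))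
        = C (A i j * B i j' + A i j' * B i j) := by
      intro i _
      rw [map_add, pderiv_mul, pderiv_mul, hGC, hHC, pderiv_C, pderiv_C]
      push_cast [map_add, map_mul]
      ring
    rw [Finset.sum_congr rfl rhs, ← map_sum C] at hder
    have h0 : (C (∑ i : Fin 3, (A i j * B i j' + A i j' * B i j)) : MvPolynomial (Fin 8) k)
        = C 0 := by rw [map_zero]; exact hder.symm
    exact C_injective (Fin 8) k h0
  obtain ⟨c, hcne, hcz⟩ := la_lemma A B hrel
  have key : (∑ j : Fin 4, C (c j) * X (xv j) ^ 2 : MvPolynomial (Fin 8) k) = 0 := by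
    calc (∑ j : Fin 4, C (c j) * X (xv j) ^ 2 : MvPolynomial (Fin 8) k)
        = ∑ j : Fin 4, ∑ i : Fin 3, (C (c j * A i j) * H i + G i * C (c j * B i j)) := by
          refine Finset.sum_congr rfl fun j _ => ?_
          rw [hX j, Finset.mul_sum]
          refine Finset.sum_congr rfl fun i _ => ?_
          rw [map_mul, map_mul]
          ring
      _ = ∑ i : Fin 3, ∑ j : Fin 4, (C (c j * A i j) * H i + G i * C (c j * B i j)) :=
          Finset.sum_comm
      _ = ∑ i : Fin 3, (C (∑ j, c j * A i j) * H i + G i * C (∑ j, c j * B i j)) := by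
          refine Finset.sum_congr rfl fun i _ => ?_
          rw [Finset.sum_add_distrib, ← Finset.sum_mul, ← Finset.mul_sum, ← map_sum C,
            ← map_sum C]
      _ = 0 := by
          refine Finset.sum_eq_zero fun i _ => ?_
          rw [(hcz i).1, (hcz i).2]
          simp
  have hcj : ∀ j : Fin 4, c j = 0 := by
    intro j
    have := congrArg (coeff (Finsupp.single (xv j) 2)) key
    rw [coeff_zero, coeff_sum] at this
    rw [← this, Finset.sum_eq_single j]
    · rw [C_mul_X_pow_eq_monomial, coeff_monomial, if_pos rfl]
    · intro s _ hs
      rw [C_mul_X_pow_eq_monomial, coeff_monomial, if_neg]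
      intro hcontra
      exact hs (xv_inj ((Finsupp.single_left_inj (two_ne_zero)).mp hcontra))
    · simp
  exact hcne (funext hcj)
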